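/- There exist constants c, c', T' > 0 such that for every integer n ≥ 2 and every real t ≥ T', the Haar probability measure μ on the orthogonal group O(n) = {U ∈ ℝ^{n×n} : U·Uᵀ = I} satisfies μ({U ∈ O(n) : max_{1≤i,j≤n} |U_{ij}| ≥ t·√(log(n)/n)}) ≤ n²·(1 − exp(−c·n^{1−c'·t²})). -/

import Mathlib

open MeasureTheory

/-- The Borel (product) σ-algebra on real matrices. -/
instance matrixMeasurableSpace (m n : Type*) : MeasurableSpace (Matrix m n ℝ) :=
  show MeasurableSpace (m → n → ℝ) from inferInstance

open Matrix
open scoped ENNReal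


abbrev OG (n : ℕ) := Matrix.orthogonalGroup (Fin n) ℝ

lemma measurable_entry {n : ℕ} (i j : Fin n) :
    Measurable fun U : OG n => (U : Matrix (Fin n) (Fin n) ℝ) i j := by
  have h1 : Measurable fun M : Matrix (Fin n) (Fin n) ℝ => M i j :=
    (measurable_pi_apply j).comp (measurable_pi_apply i)
  exact h1.comp measurable_subtype_coe

lemma sum_sq_col {n : ℕ} (U : OG n) (j : Fin n) :
    ∑ m, ((U : Matrix (Fin n) (Fin n) ℝ) m j) ^ 2 = 1 := by
  have h := (Unitary.mem_iff.mp U.2).1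
  have h2 := congrFun (congrFun h j) j
  simp only [Matrix.mul_apply, Matrix.one_apply_eq, Matrix.star_apply, star_trivial] at h2
  simpa [pow_two] using h2

lemma abs_entry_le_one {n : ℕ} (U : OG n) (i j : Fin n) :
    |(U : Matrix (Fin n) (Fin n) ℝ) i j| ≤ 1 := by
  have h := sum_sq_col U j
  have h1 : ((U : Matrix (Fin n) (Fin n) ℝ) i j) ^ 2 ≤ 1 := by
    rw [← h]
    exact Finset.single_le_sum (f := fun m => ((U : Matrix (Fin n) (Fin n) ℝ) m j) ^ 2)
      (fun m _ => sq_nonneg _) (Finset.mem_univ i)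
  nlinarith [abs_nonneg ((U : Matrix (Fin n) (Fin n) ℝ) i j),
    sq_abs ((U : Matrix (Fin n) (Fin n) ℝ) i j)]

lemma measurable_mulLeft {n : ℕ} (V : OG n) : Measurable fun U : OG n => V * U := by
  have hmul : Measurable fun U : OG n =>
      ((V : Matrix (Fin n) (Fin n) ℝ) * (U : Matrix (Fin n) (Fin n) ℝ)) := by
    apply measurable_pi_lambda
    intro i
    apply measurable_pi_lambda
    intro j
    simp only [Matrix.mul_apply]
    exact Finset.measurable_sum _ fun k _ => (measurable_entry k j).const_mul _
  exact Measurable.subtype_mk hmul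

lemma measurable_expSum {n : ℕ} (j : Fin n) (d : Fin n → ℝ) (l : ℝ) :
    Measurable fun U : OG n => Real.exp (l * ∑ m, d m * (U : Matrix (Fin n) (Fin n) ℝ) m j) := by
  apply Real.measurable_exp.comp
  apply Measurable.const_mul
  exact Finset.measurable_sum _ fun m _ => (measurable_entry m j).const_mul _

lemma integrable_expSum {n : ℕ} {μ : Measure (OG n)} [IsProbabilityMeasure μ]
    (j : Fin n) (d : Fin n → ℝ) (l : ℝ) :
    Integrable (fun U : OG n => Real.exp (l * ∑ m, d m * (U : Matrix (Fin n) (Fin n) ℝ) m j)) μ := by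
  refine (integrable_const (Real.exp (|l| * ∑ m, |d m|))).mono'
    (measurable_expSum j d l).aestronglyMeasurable (ae_of_all _ fun U => ?_)
  rw [Real.norm_eq_abs, abs_of_pos (Real.exp_pos _)]
  apply Real.exp_le_exp.2
  calc l * ∑ m, d m * (U : Matrix (Fin n) (Fin n) ℝ) m j
      ≤ |l * ∑ m, d m * (U : Matrix (Fin n) (Fin n) ℝ) m j| := le_abs_self _
    _ ≤ |l| * ∑ m, |d m| := by
        rw [abs_mul]
        apply mul_le_mul_of_nonneg_left _ (abs_nonneg l)
        calc |∑ m, d m * (U : Matrix (Fin n) (Fin n) ℝ) m j|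
            ≤ ∑ m, |d m * (U : Matrix (Fin n) (Fin n) ℝ) m j| := Finset.abs_sum_le_sum_abs _ _
          _ ≤ ∑ m, |d m| := by
              apply Finset.sum_le_sum
              intro m _
              rw [abs_mul]
              exact mul_le_of_le_one_right (abs_nonneg _) (abs_entry_le_one U m j)

/-- sign vector -/
def sg {n : ℕ} (ε : Fin n → Bool) (m : Fin n) : ℝ := if ε m then 1 else -1

lemma sg_mem {n : ℕ} (ε : Fin n → Bool) :
    Matrix.diagonal (sg ε) ∈ Matrix.orthogonalGroup (Fin n) ℝ := by
  rw [Matrix.mem_orthogonalGroup_iff]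
  have hstar : star (Matrix.diagonal (sg ε)) = Matrix.diagonal (sg ε) := by
    simp [Matrix.star_eq_conjTranspose, Matrix.diagonal_conjTranspose]
  rw [Matrix.diagonal_transpose, Matrix.diagonal_mul_diagonal]
  have h : (fun m => sg ε m * sg ε m) = fun _ => (1:ℝ) := by
    funext m
    cases h : ε m <;> simp [sg, h]
  rw [h]
  exact Matrix.diagonal_one

lemma chernoff {n : ℕ} (μ : Measure (OG n)) [IsProbabilityMeasure μ]
    (hinv : ∀ V : OG n, Measure.map (fun U => V * U) μ = μ)
    (j : Fin n) (c : Fin n → ℝ) (κ a l : ℝ) (hκ : 0 ≤ κ) (hc : ∀ m, |c m| ≤ κ)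
    (hl : 0 ≤ l) :
    μ {U : OG n | a ≤ ∑ m, c m * (U : Matrix (Fin n) (Fin n) ℝ) m j}
      ≤ ENNReal.ofReal (Real.exp (l ^ 2 * κ ^ 2 / 2 - l * a)) := by
  set f : OG n → ℝ := fun U => Real.exp (l * ∑ m, c m * (U : Matrix (Fin n) (Fin n) ℝ) m j)
    with hf
  set B : ℝ := Real.exp (l ^ 2 * κ ^ 2 / 2) with hB
  have hIf : Integrable f μ := integrable_expSum j c l
  have hmap : ∀ ε : Fin n → Bool, ∫ U, f U ∂μ
      = ∫ U, Real.exp (l * ∑ m, c m * sg ε m * (U : Matrix (Fin n) (Fin n) ℝ) m j) ∂μ := by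
    intro ε
    set D : OG n := ⟨Matrix.diagonal (sg ε), sg_mem ε⟩ with hD
    have h1 : ∫ U, f U ∂μ = ∫ U, f (D * U) ∂μ := by
      conv_lhs => rw [← hinv D]
      exact integral_map (measurable_mulLeft _).aemeasurable
        (measurable_expSum j c l).aestronglyMeasurable
    rw [h1]
    apply integral_congr_ae
    apply ae_of_all
    intro U
    have hco : ((D * U : OG n) : Matrix (Fin n) (Fin n) ℝ)
        = Matrix.diagonal (sg ε) * (U : Matrix (Fin n) (Fin n) ℝ) := rfl
    simp only [hf, hco, Matrix.diagonal_mul, mul_assoc]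
  have h2n : (0:ℝ) < 2 ^ n := by positivity
  have h3 : ∫ U, f U ∂μ = ∫ U, ((2:ℝ) ^ n)⁻¹ *
      ∑ ε : Fin n → Bool,
        Real.exp (l * ∑ m, c m * sg ε m * (U : Matrix (Fin n) (Fin n) ℝ) m j) ∂μ := by
    rw [integral_const_mul, integral_finset_sum _
      (fun ε _ => by simpa only [mul_assoc] using
        integrable_expSum (μ := μ) j (fun m => c m * sg ε m) l)]
    have : ∑ ε : Fin n → Bool, ∫ U, Real.exp
        (l * ∑ m, c m * sg ε m * (U : Matrix (Fin n) (Fin n) ℝ) m j) ∂μ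
        = (2:ℝ) ^ n * ∫ U, f U ∂μ := by
      rw [Finset.sum_congr rfl (fun ε _ => (hmap ε).symm), Finset.sum_const]
      simp [Finset.card_univ, mul_comm]
    rw [this]
    field_simp
  have hpt : ∀ U : OG n, ((2:ℝ) ^ n)⁻¹ *
      ∑ ε : Fin n → Bool,
        Real.exp (l * ∑ m, c m * sg ε m * (U : Matrix (Fin n) (Fin n) ℝ) m j) ≤ B := by
    intro U
    set x : Fin n → ℝ := fun m => (U : Matrix (Fin n) (Fin n) ℝ) m j with hx
    have hsum : ∑ ε : Fin n → Bool, Real.exp (l * ∑ m, c m * sg ε m * x m)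
        = 2 ^ n * ∏ m, Real.cosh (l * (c m * x m)) := by
      have step1 : ∀ ε : Fin n → Bool, Real.exp (l * ∑ m, c m * sg ε m * x m)
          = ∏ m, Real.exp ((l * (c m * x m)) * (if ε m then (1:ℝ) else -1)) := by
        intro ε
        rw [Finset.mul_sum, Real.exp_sum]
        refine Finset.prod_congr rfl fun m _ => ?_
        simp only [sg]
        ring_nf
      simp_rw [step1]
      have step2 : ∑ ε : Fin n → Bool, ∏ m,
          Real.exp ((l * (c m * x m)) * (if ε m then (1:ℝ) else -1))
          = ∏ m, ∑ b : Bool, Real.exp ((l * (c m * x m)) * (if b then (1:ℝ) else -1)) := by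
        rw [Finset.prod_univ_sum]
        rw [Fintype.piFinset_univ]
      rw [step2]
      have step3 : ∀ m : Fin n, ∑ b : Bool,
          Real.exp ((l * (c m * x m)) * (if b then (1:ℝ) else -1))
          = 2 * Real.cosh (l * (c m * x m)) := by
        intro m
        rw [Fintype.sum_bool]
        simp only [Bool.false_eq_true, if_true, if_false, mul_one, mul_neg_one]
        rw [Real.cosh_eq]
        ring
      rw [Finset.prod_congr rfl (fun m _ => step3 m), Finset.prod_mul_distrib,
        Finset.prod_const]
      simp [Finset.card_univ]
    rw [hsum, ← mul_assoc, inv_mul_cancel₀ (ne_of_gt h2n), one_mul]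
    calc ∏ m, Real.cosh (l * (c m * x m))
        ≤ ∏ m, Real.exp ((l * (c m * x m)) ^ 2 / 2) := by
          apply Finset.prod_le_prod (fun m _ => (Real.cosh_pos _).le)
          exact fun m _ => Real.cosh_le_exp_half_sq _
      _ = Real.exp (∑ m, (l * (c m * x m)) ^ 2 / 2) := by rw [← Real.exp_sum]
      _ ≤ B := by
          rw [hB]
          apply Real.exp_le_exp.2
          have hxb : ∑ m, c m ^ 2 * x m ^ 2 ≤ κ ^ 2 := by
            calc ∑ m, c m ^ 2 * x m ^ 2 ≤ ∑ m, κ ^ 2 * x m ^ 2 := by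
                  apply Finset.sum_le_sum
                  intro m _
                  apply mul_le_mul_of_nonneg_right _ (sq_nonneg _)
                  calc c m ^ 2 = |c m| ^ 2 := (sq_abs _).symm
                    _ ≤ κ ^ 2 := by nlinarith [hc m, abs_nonneg (c m)]
              _ = κ ^ 2 := by
                  rw [← Finset.mul_sum, hx]
                  rw [sum_sq_col U j, mul_one]
          calc ∑ m, (l * (c m * x m)) ^ 2 / 2 = (l ^ 2 / 2) * ∑ m, c m ^ 2 * x m ^ 2 := by
                rw [Finset.mul_sum]
                exact Finset.sum_congr rfl fun m _ => by ring
            _ ≤ (l ^ 2 / 2) * κ ^ 2 := by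
                apply mul_le_mul_of_nonneg_left hxb (by positivity)
            _ = l ^ 2 * κ ^ 2 / 2 := by ring
  have hIB : ∫ U, f U ∂μ ≤ B := by
    rw [h3]
    calc ∫ U, ((2:ℝ) ^ n)⁻¹ * ∑ ε : Fin n → Bool,
          Real.exp (l * ∑ m, c m * sg ε m * (U : Matrix (Fin n) (Fin n) ℝ) m j) ∂μ
        ≤ ∫ _U, B ∂μ := by
          apply integral_mono _ (integrable_const B) hpt
          apply Integrable.const_mul
          apply integrable_finset_sum
          intro ε _
          simpa only [mul_assoc] using integrable_expSum (μ := μ) j (fun m => c m * sg ε m) l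
      _ = B := by simp
  have hM := mul_meas_ge_le_integral_of_nonneg
    (ae_of_all μ fun U => (Real.exp_pos _).le) hIf (Real.exp (l * a))
  have hsub : {U : OG n | a ≤ ∑ m, c m * (U : Matrix (Fin n) (Fin n) ℝ) m j}
      ⊆ {U : OG n | Real.exp (l * a) ≤ f U} := fun U hU =>
    Real.exp_le_exp.2 (mul_le_mul_of_nonneg_left hU hl)
  have hne : μ {U : OG n | Real.exp (l * a) ≤ f U} ≠ ⊤ := measure_ne_top μ _
  have htoR : (μ {U : OG n | Real.exp (l * a) ≤ f U}).toReal
      ≤ Real.exp (l ^ 2 * κ ^ 2 / 2 - l * a) := by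
    rw [Real.exp_sub, ← hB, le_div_iff₀ (Real.exp_pos _)]
    calc (μ {U : OG n | Real.exp (l * a) ≤ f U}).toReal * Real.exp (l * a)
        = Real.exp (l * a) * (μ {U | Real.exp (l * a) ≤ f U}).toReal := by ring
      _ ≤ ∫ U, f U ∂μ := hM
      _ ≤ B := hIB
  calc μ {U : OG n | a ≤ ∑ m, c m * (U : Matrix (Fin n) (Fin n) ℝ) m j}
      ≤ μ {U : OG n | Real.exp (l * a) ≤ f U} := measure_mono hsub
    _ = ENNReal.ofReal ((μ {U : OG n | Real.exp (l * a) ≤ f U}).toReal) :=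
        (ENNReal.ofReal_toReal hne).symm
    _ ≤ ENNReal.ofReal (Real.exp (l ^ 2 * κ ^ 2 / 2 - l * a)) :=
        ENNReal.ofReal_le_ofReal htoR

lemma exists_row_const (n : ℕ) (hn : 2 ≤ n) (i : Fin n) :
    ∃ H : Matrix (Fin n) (Fin n) ℝ, H ∈ Matrix.orthogonalGroup (Fin n) ℝ ∧
      ∀ m, H i m = 1 / Real.sqrt n := by
  have hn0 : (0:ℝ) < (n:ℝ) := by
    have : (0:ℕ) < n := by omega
    exact_mod_cast this
  set s : ℝ := 1 / Real.sqrt n with hs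
  have hsqrt_pos : 0 < Real.sqrt n := Real.sqrt_pos.2 hn0
  have hs_pos : 0 < s := by positivity
  have hs_sq : s ^ 2 = 1 / n := by
    rw [hs, div_pow, one_pow, Real.sq_sqrt hn0.le]
  have hs_lt_one : s < 1 := by
    rw [hs, div_lt_one hsqrt_pos]
    have : (1:ℝ) < Real.sqrt 2 := by
      rw [show (1:ℝ) = Real.sqrt 1 by simp]
      exact Real.sqrt_lt_sqrt (by norm_num) (by norm_num)
    calc (1:ℝ) < Real.sqrt 2 := this
      _ ≤ Real.sqrt n := Real.sqrt_le_sqrt (by exact_mod_cast hn)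
  set u : Fin n → ℝ := fun m => (if m = i then (1:ℝ) else 0) - s with hu
  have hd_pos : (0:ℝ) < 2 - 2 * s := by linarith
  have husum : ∑ m, u m ^ 2 = 2 - 2 * s := by
    have : ∀ m : Fin n, u m ^ 2 = s ^ 2 + (if m = i then (1 - 2 * s) else 0) := by
      intro m
      rw [hu]
      by_cases h : m = i <;> simp [h] <;> ring
    rw [Finset.sum_congr rfl fun m _ => this m, Finset.sum_add_distrib,
      Finset.sum_const, Finset.sum_ite_eq' Finset.univ i fun _ => (1 - 2*s)]
    simp only [Finset.mem_univ, if_true, Finset.card_univ, Fintype.card_fin,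
      nsmul_eq_mul]
    rw [hs_sq]
    field_simp
    ring
  set W : Matrix (Fin n) (Fin n) ℝ := Matrix.vecMulVec u u with hW
  have hWW : W * W = (2 - 2 * s) • W := by
    ext p q
    simp only [hW, Matrix.mul_apply, Matrix.vecMulVec_apply, Matrix.smul_apply,
      smul_eq_mul]
    calc ∑ k, u p * u k * (u k * u q) = (∑ k, u k ^ 2) * (u p * u q) := by
          rw [Finset.sum_mul]
          exact Finset.sum_congr rfl fun k _ => by ring
      _ = (2 - 2 * s) * (u p * u q) := by rw [husum]
  set H : Matrix (Fin n) (Fin n) ℝ := 1 - (2 / (2 - 2 * s)) • W with hH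
  have hHsymm : star H = H := by
    ext p q
    simp only [hH, Matrix.star_apply, Matrix.sub_apply, Matrix.smul_apply,
      Matrix.one_apply, Matrix.vecMulVec_apply, hW, star_trivial, smul_eq_mul]
    by_cases h : p = q
    · subst h; ring_nf
    · rw [if_neg h, if_neg (Ne.symm h)]
      ring
  have hHH : H * H = 1 := by
    rw [hH]
    rw [Matrix.sub_mul, Matrix.mul_sub, Matrix.mul_sub, Matrix.one_mul, Matrix.mul_one,
      Matrix.smul_mul, Matrix.mul_smul, Matrix.one_mul, Matrix.mul_smul, hWW,
      smul_smul, smul_smul]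
    have hkey : 2 / (2 - 2*s) * (2 / (2 - 2*s)) * (2 - 2*s) = 2 / (2 - 2*s) + 2 / (2 - 2*s) := by
      field_simp
      ring
    rw [hkey, add_smul]
    abel
  refine ⟨H, ?_, ?_⟩
  · rw [Matrix.mem_orthogonalGroup_iff, ← Matrix.conjTranspose_eq_transpose_of_trivial,
      ← Matrix.star_eq_conjTranspose, hHsymm, hHH]
  · intro m
    have hui : u i = 1 - s := by simp [hu]
    have hfac : 2 / (2 - 2*s) * (1 - s) = 1 := by
      rw [div_mul_eq_mul_div, div_eq_one_iff_eq (by linarith)]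
      ring
    have hWim : W i m = u i * u m := by rw [hW, Matrix.vecMulVec_apply]
    have hgoal : H i m = (if i = m then (1:ℝ) else 0) - 2 / (2 - 2*s) * (u i * u m) := by
      simp only [hH, Matrix.sub_apply, Matrix.smul_apply, Matrix.one_apply, smul_eq_mul, hWim]
    rw [hgoal, hui]
    by_cases h : m = i
    · rw [if_pos h.symm]
      have hum : u m = 1 - s := by rw [h, hui]
      rw [hum]
      calc 1 - 2 / (2 - 2*s) * ((1-s) * (1-s)) = 1 - (2 / (2-2*s) * (1-s)) * (1-s) := by ring
        _ = 1 - (1-s) := by rw [hfac]; ring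
        _ = s := by ring
    · rw [if_neg (fun hh => h hh.symm)]
      have hum : u m = -s := by simp [hu, h]
      rw [hum]
      calc 0 - 2 / (2 - 2*s) * ((1-s) * (-s)) = (2 / (2-2*s) * (1-s)) * s := by ring
        _ = s := by rw [hfac]; ring

lemma entry_bound {n : ℕ} (hn : 2 ≤ n) (μ : Measure (OG n)) [IsProbabilityMeasure μ]
    (hinv : ∀ V : OG n, Measure.map (fun U => V * U) μ = μ)
    (i j : Fin n) (a : ℝ) (ha : 0 ≤ a) (sn : ℝ) (hsn : sn = 1 ∨ sn = -1) :
    μ {U : OG n | a ≤ sn * (U : Matrix (Fin n) (Fin n) ℝ) i j}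
      ≤ ENNReal.ofReal (Real.exp (-((n : ℝ) * a ^ 2) / 2)) := by
  have hn0 : (0:ℝ) < (n:ℝ) := by
    have : (0:ℕ) < n := by omega
    exact_mod_cast this
  have hsn_abs : |sn| = 1 := by rcases hsn with h | h <;> rw [h] <;> norm_num
  obtain ⟨Hm, hmem, hrow⟩ := exists_row_const n hn i
  set H : OG n := ⟨Hm, hmem⟩ with hHdef
  have hMS : MeasurableSet {U : OG n | a ≤ sn * (U : Matrix (Fin n) (Fin n) ℝ) i j} :=
    measurableSet_le measurable_const ((measurable_entry i j).const_mul sn)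
  have h1 : μ {U : OG n | a ≤ sn * (U : Matrix (Fin n) (Fin n) ℝ) i j}
      = μ {U : OG n | a ≤ ∑ m, (sn * (1 / Real.sqrt n)) * (U : Matrix (Fin n) (Fin n) ℝ) m j} := by
    conv_lhs => rw [← hinv H]
    rw [Measure.map_apply (measurable_mulLeft H) hMS]
    congr 1
    ext U
    simp only [Set.mem_preimage, Set.mem_setOf_eq]
    have hco : ((H * U : OG n) : Matrix (Fin n) (Fin n) ℝ) i j
        = ∑ m, Hm i m * (U : Matrix (Fin n) (Fin n) ℝ) m j := by
      have : ((H * U : OG n) : Matrix (Fin n) (Fin n) ℝ)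
          = Hm * (U : Matrix (Fin n) (Fin n) ℝ) := rfl
      rw [this, Matrix.mul_apply]
    rw [hco, Finset.mul_sum]
    constructor
    · intro h
      refine le_trans h (le_of_eq ?_)
      exact Finset.sum_congr rfl fun m _ => by rw [hrow m]; ring
    · intro h
      refine le_trans h (le_of_eq ?_)
      exact Finset.sum_congr rfl fun m _ => by rw [hrow m]; ring
  rw [h1]
  have hκ : (0:ℝ) ≤ 1 / Real.sqrt n := by positivity
  have hc : ∀ m : Fin n, |sn * (1 / Real.sqrt n)| ≤ 1 / Real.sqrt n := by
    intro m
    rw [abs_mul, hsn_abs, one_mul, abs_of_nonneg hκ]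
  have hch := chernoff μ hinv j (fun _ => sn * (1 / Real.sqrt n)) (1 / Real.sqrt n)
    a ((n:ℝ) * a) hκ hc (by positivity)
  refine le_trans hch (le_of_eq ?_)
  congr 1
  have hsq : (1 / Real.sqrt n) ^ 2 = 1 / (n:ℝ) := by
    rw [div_pow, one_pow, Real.sq_sqrt hn0.le]
  rw [hsq]
  field_simp
  ring

lemma keynum (n : ℕ) (hn : 2 ≤ n) (t : ℝ) (ht : 4 ≤ t) :
    2 * Real.exp (-(t ^ 2 * Real.log n) / 2)
      ≤ 1 - Real.exp (-1 * (n : ℝ) ^ ((1 : ℝ) - 1 / 4 * t ^ 2)) := by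
  have hn0 : (0:ℝ) < (n:ℝ) := by
    have : (0:ℕ) < n := by omega
    exact_mod_cast this
  set L : ℝ := Real.log n with hL
  have hlog2 : (0:ℝ) < Real.log 2 := Real.log_pos (by norm_num)
  have hL2 : Real.log 2 ≤ L := by
    rw [hL]
    apply Real.log_le_log (by norm_num)
    exact_mod_cast hn
  have hLpos : 0 < L := lt_of_lt_of_le hlog2 hL2
  set x : ℝ := (n:ℝ) ^ ((1:ℝ) - 1 / 4 * t ^ 2) with hx
  have hxe : x = Real.exp (L * (1 - 1 / 4 * t ^ 2)) := by
    rw [hx, Real.rpow_def_of_pos hn0]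
  have hxpos : 0 < x := by rw [hxe]; exact Real.exp_pos _
  have ht2 : (16:ℝ) ≤ t ^ 2 := by nlinarith
  have hx18 : x ≤ 1 / 8 := by
    have harg : L * (1 - 1 / 4 * t ^ 2) ≤ Real.log 2 * (-3) := by nlinarith
    have h8 : Real.exp (Real.log 2 * (-3)) = 1 / 8 := by
      rw [show Real.log 2 * (-3) = Real.log 2 * ((-3:ℤ):ℝ) by norm_num,
        ← Real.rpow_def_of_pos (by norm_num : (0:ℝ) < 2), Real.rpow_intCast]
      norm_num
    rw [hxe, ← h8]
    exact Real.exp_le_exp.2 harg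
  have hlow : x / 2 ≤ 1 - Real.exp (-x) := by
    have h1 : x + 1 ≤ Real.exp x := Real.add_one_le_exp x
    have hex : 0 < Real.exp x := Real.exp_pos x
    have h3 : Real.exp x * (Real.exp x)⁻¹ = 1 := mul_inv_cancel₀ (ne_of_gt hex)
    rw [Real.exp_neg]
    have hinv2 : (Real.exp x)⁻¹ ≤ 1 - x / 2 := by
      have hinvpos : 0 < (Real.exp x)⁻¹ := by positivity
      nlinarith
    linarith
  have hmain : 2 * Real.exp (-(t ^ 2 * L) / 2) ≤ x / 2 := by
    have h32 : (4:ℝ) ≤ Real.exp (L * (1 + 1 / 4 * t ^ 2)) := by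
      have harg : Real.log 2 * 5 ≤ L * (1 + 1 / 4 * t ^ 2) := by nlinarith
      have h5 : Real.exp (Real.log 2 * 5) = 32 := by
        rw [show Real.log 2 * 5 = Real.log 2 * ((5:ℤ):ℝ) by norm_num,
          ← Real.rpow_def_of_pos (by norm_num : (0:ℝ) < 2), Real.rpow_intCast]
        norm_num
      have := Real.exp_le_exp.2 harg
      rw [h5] at this
      linarith
    have hsplit : x = Real.exp (L * (1 + 1 / 4 * t ^ 2)) * Real.exp (-(t ^ 2 * L) / 2) := by
      rw [hxe, ← Real.exp_add]
      congr 1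
      ring
    rw [hsplit]
    have hep : 0 < Real.exp (-(t ^ 2 * L) / 2) := Real.exp_pos _
    nlinarith
  have hgoal : -1 * x = -x := by ring
  rw [hgoal]
  linarith

/-- Entry delocalization for Haar-distributed orthogonal matrices: there are constants
`c, c', T' > 0` such that for every `n ≥ 2` and `t ≥ T'`, the Haar probability measure `μ`
on `O(n)` (formalized as any left-translation-invariant Borel probability measure on the
orthogonal group, which is unique) satisfies
`μ({U : max_{i,j} |U_{ij}| ≥ t·√(log n / n)}) ≤ n²·(1 − exp(−c·n^{1−c'·t²}))`. -/
theorem haar_orthogonal_delocalization :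
    ∃ c c' T' : ℝ, 0 < c ∧ 0 < c' ∧ 0 < T' ∧
      ∀ n : ℕ, 2 ≤ n →
        ∀ μ : Measure (Matrix.orthogonalGroup (Fin n) ℝ), IsProbabilityMeasure μ →
          (∀ V : Matrix.orthogonalGroup (Fin n) ℝ,
            Measure.map (fun U => V * U) μ = μ) →
          ∀ t : ℝ, T' ≤ t →
            μ {U : Matrix.orthogonalGroup (Fin n) ℝ |
                ∃ i j : Fin n,
                  t * Real.sqrt (Real.log n / n) ≤ |(U : Matrix (Fin n) (Fin n) ℝ) i j|} ≤
              ENNReal.ofReal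
                ((n : ℝ) ^ 2 *
                  (1 - Real.exp (-c * (n : ℝ) ^ ((1 : ℝ) - c' * t ^ 2)))) := by
  refine ⟨1, 1/4, 4, one_pos, by norm_num, by norm_num, ?_⟩
  intro n hn μ hP hinv t ht
  haveI := hP
  have hn0 : (0:ℝ) < (n:ℝ) := by
    have : (0:ℕ) < n := by omega
    exact_mod_cast this
  have hlog : (0:ℝ) ≤ Real.log n := Real.log_nonneg (by exact_mod_cast (by omega : 1 ≤ n))
  set a : ℝ := t * Real.sqrt (Real.log n / n) with ha_def
  have ht0 : (0:ℝ) ≤ t := by linarith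
  have ha : 0 ≤ a := mul_nonneg ht0 (Real.sqrt_nonneg _)
  have hna : (n:ℝ) * a ^ 2 = t ^ 2 * Real.log n := by
    rw [ha_def, mul_pow, Real.sq_sqrt (by positivity : (0:ℝ) ≤ Real.log n / n)]
    field_simp
  set q : ℝ := Real.exp (-((n:ℝ) * a ^ 2) / 2) with hq
  have hq0 : 0 ≤ q := (Real.exp_pos _).le
  -- union bound
  set S1 : Fin n → Fin n → Set (OG n) :=
    fun i j => {U : OG n | a ≤ (1:ℝ) * (U : Matrix (Fin n) (Fin n) ℝ) i j} with hS1
  set S2 : Fin n → Fin n → Set (OG n) :=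
    fun i j => {U : OG n | a ≤ (-1:ℝ) * (U : Matrix (Fin n) (Fin n) ℝ) i j} with hS2
  have hsub : {U : OG n | ∃ i j : Fin n, a ≤ |(U : Matrix (Fin n) (Fin n) ℝ) i j|}
      ⊆ ⋃ i, ⋃ j, (S1 i j ∪ S2 i j) := by
    rintro U ⟨i, j, hij⟩
    refine Set.mem_iUnion.2 ⟨i, Set.mem_iUnion.2 ⟨j, ?_⟩⟩
    rcases le_abs.mp hij with h | h
    · exact Or.inl (by simpa [hS1] using h)
    · exact Or.inr (by simpa [hS2] using h)
  have hbound : ∀ i j : Fin n, μ (S1 i j ∪ S2 i j) ≤ ENNReal.ofReal (2 * q) := by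
    intro i j
    calc μ (S1 i j ∪ S2 i j) ≤ μ (S1 i j) + μ (S2 i j) := measure_union_le _ _
      _ ≤ ENNReal.ofReal q + ENNReal.ofReal q := by
          gcongr
          · exact entry_bound hn μ hinv i j a ha 1 (Or.inl rfl)
          · exact entry_bound hn μ hinv i j a ha (-1) (Or.inr rfl)
      _ = ENNReal.ofReal (2 * q) := by
          rw [← ENNReal.ofReal_add hq0 hq0]
          congr 1
          ring
  calc μ {U : OG n | ∃ i j : Fin n, a ≤ |(U : Matrix (Fin n) (Fin n) ℝ) i j|}
      ≤ μ (⋃ i, ⋃ j, (S1 i j ∪ S2 i j)) := measure_mono hsub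
    _ ≤ ∑' i : Fin n, μ (⋃ j, (S1 i j ∪ S2 i j)) := measure_iUnion_le _
    _ = ∑ i : Fin n, μ (⋃ j, (S1 i j ∪ S2 i j)) := tsum_fintype _
    _ ≤ ∑ i : Fin n, ∑ j : Fin n, μ (S1 i j ∪ S2 i j) := by
        apply Finset.sum_le_sum
        intro i _
        calc μ (⋃ j, (S1 i j ∪ S2 i j)) ≤ ∑' j : Fin n, μ (S1 i j ∪ S2 i j) :=
              measure_iUnion_le _
          _ = ∑ j : Fin n, μ (S1 i j ∪ S2 i j) := tsum_fintype _
    _ ≤ ∑ _i : Fin n, ∑ _j : Fin n, ENNReal.ofReal (2 * q) := by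
        apply Finset.sum_le_sum
        intro i _
        apply Finset.sum_le_sum
        intro j _
        exact hbound i j
    _ = (n : ℝ≥0∞) * ((n : ℝ≥0∞) * ENNReal.ofReal (2 * q)) := by
        simp [Finset.sum_const, Finset.card_univ, mul_assoc]
    _ = ENNReal.ofReal ((n:ℝ) * ((n:ℝ) * (2 * q))) := by
        rw [ENNReal.ofReal_mul (le_of_lt hn0), ENNReal.ofReal_mul (le_of_lt hn0),
          ENNReal.ofReal_mul (by norm_num : (0:ℝ) ≤ 2), ENNReal.ofReal_natCast]
    _ ≤ ENNReal.ofReal ((n : ℝ) ^ 2 *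
          (1 - Real.exp (-1 * (n : ℝ) ^ ((1 : ℝ) - 1/4 * t ^ 2)))) := by
        apply ENNReal.ofReal_le_ofReal
        have hkey := keynum n hn t ht
        rw [hq, hna]
        calc (n:ℝ) * ((n:ℝ) * (2 * Real.exp (-(t ^ 2 * Real.log n) / 2)))
            = (n:ℝ)^2 * (2 * Real.exp (-(t ^ 2 * Real.log n) / 2)) := by ring
          _ ≤ (n:ℝ)^2 * (1 - Real.exp (-1 * (n : ℝ) ^ ((1 : ℝ) - 1/4 * t ^ 2))) := by
              apply mul_le_mul_of_nonneg_left hkey (by positivity)
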